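/- The number of families of four pairwise distinct 3-element subsets of {1,2,3,4,5} in which every two members intersect in at least 2 elements equals 5: each such family consists of all four 3-subsets of a fixed 4-element subset. -/
import Mathlib

abbrev small : Finset (Finset (Finset (Fin 5))) :=
  ((Finset.univ.filter (fun S : Finset (Fin 5) => S.card = 3)).powersetCard 4).filter
    (fun P => ∀ S ∈ P, ∀ T ∈ P, S ≠ T → 2 ≤ (S ∩ T).card)

lemma small_card : small.card = 5 := by decide

set_option maxRecDepth 10000 in
lemma small_eq : small = (Finset.univ : Finset (Fin 5)).image
    (fun i => Finset.univ.filter (fun S : Finset (Fin 5) => S.card = 3 ∧ S ⊆ Finset.univ.erase i)) := by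
  decide

theorem stmt_13 :
    ((Finset.univ : Finset (Finset (Finset (Fin 5)))).filter
      (fun P => P.card = 4 ∧ (∀ S ∈ P, S.card = 3) ∧
        ∀ S ∈ P, ∀ T ∈ P, S ≠ T → 2 ≤ (S ∩ T).card)).card = 5 ∧
    ∀ P : Finset (Finset (Fin 5)),
      (P.card = 4 ∧ (∀ S ∈ P, S.card = 3) ∧
        ∀ S ∈ P, ∀ T ∈ P, S ≠ T → 2 ≤ (S ∩ T).card) →
      ∃ T : Finset (Fin 5), T.card = 4 ∧
        P = Finset.univ.filter (fun S => S.card = 3 ∧ S ⊆ T) := by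
  have hmem : ∀ P : Finset (Finset (Fin 5)),
      (P.card = 4 ∧ (∀ S ∈ P, S.card = 3) ∧
        ∀ S ∈ P, ∀ T ∈ P, S ≠ T → 2 ≤ (S ∩ T).card) ↔ P ∈ small := by
    intro P
    simp [small, Finset.mem_powersetCard, Finset.subset_iff]
    tauto
  constructor
  · rw [show ((Finset.univ : Finset (Finset (Finset (Fin 5)))).filter
      (fun P => P.card = 4 ∧ (∀ S ∈ P, S.card = 3) ∧
        ∀ S ∈ P, ∀ T ∈ P, S ≠ T → 2 ≤ (S ∩ T).card)) = small by
      ext P; simp only [Finset.mem_filter, Finset.mem_univ, true_and]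
      exact (hmem P).trans Finset.mem_filter]
    exact small_card
  · intro P hP
    have h : P ∈ small := (hmem P).mp hP
    rw [small_eq, Finset.mem_image] at h
    obtain ⟨i, -, rfl⟩ := h
    exact ⟨Finset.univ.erase i, by simp [Finset.card_erase_of_mem], rfl⟩
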